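/- Under the random-intercept crossed effects design with K ≥ 2 and p − 1 = ∑_k G_k ≥ K+1, let T ∈ ℝ^{p×p} be diagonal with nonnegative entries (equal to T_k ≥ 0 on the block of factor k and T_0 ≥ 0 at θ_0), τ > 0, Q = T + τU, Q̄ = Diag(Q)^{−1/2} Q Diag(Q)^{−1/2} with eigenvalues μ̄_1 ≤ ⋯ ≤ μ̄_p, and let ν̄_1 ≤ ⋯ ≤ ν̄_{p−1} be the eigenvalues of Ā^(r). If ν̄_K ≤ 0 ≤ ν̄_{p−2}, then μ̄_{p−2} · (1 + (K−1)ν̄_K) ≤ μ̄_{K+1} · (1 + (K−1)ν̄_{p−2}); i.e., the effective condition number satisfies κ_{K+1,p−2}(Q̄) = μ̄_{p−2}/μ̄_{K+1} ≤ (1 + (K−1)ν̄_{p−2})/(1 + (K−1)ν̄_K) whenever the denominator is positive. -/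

import Mathlib

open Matrix

namespace Crossed

/-- Coordinates: `none` is the intercept `θ₀`, `some ⟨k, a⟩` is level `a` of factor `k`. -/
abbrev Idx (K : ℕ) (G : Fin K → ℕ) := Option (Σ k : Fin K, Fin (G k))

/-- Coordinates of the random effects only. -/
abbrev Lvl (K : ℕ) (G : Fin K → ℕ) := Σ k : Fin K, Fin (G k)

/-- The design matrix `V ∈ ℝ^{N×p}`. -/
noncomputable def V (K N : ℕ) (G : Fin K → ℕ) (g : Fin N → ∀ k : Fin K, Fin (G k)) :
    Matrix (Fin N) (Idx K G) ℝ :=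
  fun i c => c.elim 1 (fun s => if g i s.1 = s.2 then 1 else 0)

/-- `U = Vᵀ V`. -/
noncomputable def U (K N : ℕ) (G : Fin K → ℕ) (g : Fin N → ∀ k : Fin K, Fin (G k)) :
    Matrix (Idx K G) (Idx K G) ℝ :=
  (V K N G g)ᵀ * V K N G g

/-- The posterior precision matrix `Q = T + τ U` (`T` diagonal). -/
noncomputable def Q (K N : ℕ) (G : Fin K → ℕ) (g : Fin N → ∀ k : Fin K, Fin (G k))
    (T0 : ℝ) (Tv : Fin K → ℝ) (τ : ℝ) : Matrix (Idx K G) (Idx K G) ℝ :=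
  diagonal (fun c => c.elim T0 (fun s => Tv s.1)) + τ • U K N G g

/-- The Jacobi preconditioned matrix `Q̄ = Diag(Q)^{−1/2} Q Diag(Q)^{−1/2}`. -/
noncomputable def Qbar (K N : ℕ) (G : Fin K → ℕ) (g : Fin N → ∀ k : Fin K, Fin (G k))
    (T0 : ℝ) (Tv : Fin K → ℝ) (τ : ℝ) : Matrix (Idx K G) (Idx K G) ℝ :=
  diagonal (fun c => (Real.sqrt (Q K N G g T0 Tv τ c c))⁻¹) * Q K N G g T0 Tv τ *
    diagonal (fun c => (Real.sqrt (Q K N G g T0 Tv τ c c))⁻¹)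

/-- The restricted design matrix `V^(r)`. -/
noncomputable def Vr (K N : ℕ) (G : Fin K → ℕ) (g : Fin N → ∀ k : Fin K, Fin (G k)) :
    Matrix (Fin N) (Lvl K G) ℝ :=
  fun i s => if g i s.1 = s.2 then 1 else 0

/-- `U^(r) = (V^(r))ᵀ V^(r)`. -/
noncomputable def Ur (K N : ℕ) (G : Fin K → ℕ) (g : Fin N → ∀ k : Fin K, Fin (G k)) :
    Matrix (Lvl K G) (Lvl K G) ℝ :=
  (Vr K N G g)ᵀ * Vr K N G g

/-- `A^(r) = U^(r) − Diag(U^(r))`. -/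
noncomputable def Ar (K N : ℕ) (G : Fin K → ℕ) (g : Fin N → ∀ k : Fin K, Fin (G k)) :
    Matrix (Lvl K G) (Lvl K G) ℝ :=
  Ur K N G g - diagonal (fun c => Ur K N G g c c)

/-- `Ā^(r) = (D^(r))^{−1/2} A^(r) (D^(r))^{−1/2}` with `D^(r) = (K−1)·Diag(U^(r))`. -/
noncomputable def Abar (K N : ℕ) (G : Fin K → ℕ) (g : Fin N → ∀ k : Fin K, Fin (G k)) :
    Matrix (Lvl K G) (Lvl K G) ℝ :=
  diagonal (fun c => (Real.sqrt (((K : ℝ) - 1) * Ur K N G g c c))⁻¹) * Ar K N G g *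
    diagonal (fun c => (Real.sqrt (((K : ℝ) - 1) * Ur K N G g c c))⁻¹)

namespace CFGen

open Finset

variable {n : Type*} [Fintype n] [DecidableEq n]

variable {n : Type*} [Fintype n] [DecidableEq n]

lemma dot_eq_inner (x y : EuclideanSpace ℝ n) : x ⬝ᵥ y = (inner ℝ x y : ℝ) := by
  simp [dotProduct, PiLp.inner_apply, RCLike.inner_apply, conj_trivial, mul_comm]

lemma quad_expansion {A : Matrix n n ℝ} (hA : A.IsHermitian) (x : EuclideanSpace ℝ n) :
    x ⬝ᵥ (A *ᵥ x) = ∑ c, hA.eigenvalues c * (hA.eigenvectorBasis.repr x c) ^ 2 := by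
  have hx : ∑ c, hA.eigenvectorBasis.repr x c • (hA.eigenvectorBasis c : EuclideanSpace ℝ n) = x :=
    hA.eigenvectorBasis.sum_repr x
  have hAx : (WithLp.toLp 2 (A *ᵥ x) : EuclideanSpace ℝ n)
      = ∑ c, (hA.eigenvectorBasis.repr x c * hA.eigenvalues c) •
          (hA.eigenvectorBasis c : EuclideanSpace ℝ n) := by
    apply WithLp.ofLp_injective 2
    conv_lhs => rw [← hx]
    have h1 : (A *ᵥ WithLp.ofLp (∑ c, hA.eigenvectorBasis.repr x c •
        (hA.eigenvectorBasis c : EuclideanSpace ℝ n)) : n → ℝ)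
        = A.mulVecLin (∑ c, hA.eigenvectorBasis.repr x c •
          WithLp.ofLp (hA.eigenvectorBasis c : EuclideanSpace ℝ n)) := by
      simp only [WithLp.ofLp_sum, WithLp.ofLp_smul]; rfl
    simp only [WithLp.ofLp_toLp]
    rw [h1, map_sum, WithLp.ofLp_sum]
    refine Finset.sum_congr rfl fun c _ => ?_
    have h3 : A.mulVecLin (hA.eigenvectorBasis c : EuclideanSpace ℝ n)
        = hA.eigenvalues c • (hA.eigenvectorBasis c : EuclideanSpace ℝ n) :=
      hA.mulVec_eigenvectorBasis c
    rw [_root_.map_smul, h3, smul_smul, mul_comm]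
    rfl
  rw [show x ⬝ᵥ (A *ᵥ x) = x ⬝ᵥ WithLp.ofLp (WithLp.toLp 2 (A *ᵥ x) : EuclideanSpace ℝ n) from rfl,
    dot_eq_inner, hAx, inner_sum]
  refine Finset.sum_congr rfl fun c _ => ?_
  rw [real_inner_smul_right]
  have h2 : (inner ℝ x (hA.eigenvectorBasis c : EuclideanSpace ℝ n) : ℝ)
      = hA.eigenvectorBasis.repr x c := by
    rw [real_inner_comm, hA.eigenvectorBasis.repr_apply_apply]
  rw [h2]; ring

lemma inner_self_eq_sum (y : EuclideanSpace ℝ n) : (inner ℝ y y : ℝ) = ∑ c, y c ^ 2 := by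
  rw [PiLp.inner_apply]; simp [RCLike.inner_apply, conj_trivial, sq]

lemma dot_self_expansion {A : Matrix n n ℝ} (hA : A.IsHermitian) (x : EuclideanSpace ℝ n) :
    x ⬝ᵥ x = ∑ c, (hA.eigenvectorBasis.repr x c) ^ 2 :=
  calc x ⬝ᵥ x = (inner ℝ x x : ℝ) := dot_eq_inner x x
  _ = (inner ℝ (hA.eigenvectorBasis.repr x) (hA.eigenvectorBasis.repr x) : ℝ) :=
      (hA.eigenvectorBasis.repr.inner_map_map x x).symm
  _ = ∑ c, (hA.eigenvectorBasis.repr x c) ^ 2 := inner_self_eq_sum _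

lemma repr_zero_of_mem_span {A : Matrix n n ℝ} (hA : A.IsHermitian) (s : Finset n)
    (x : EuclideanSpace ℝ n)
    (hx : x ∈ Submodule.span ℝ (hA.eigenvectorBasis '' (s : Set n)))
    (c : n) (hc : c ∉ s) : hA.eigenvectorBasis.repr x c = 0 := by
  induction hx using Submodule.span_induction with
  | mem y hy =>
    obtain ⟨d, hd, rfl⟩ := hy
    rw [hA.eigenvectorBasis.repr_apply_apply]
    have hne : c ≠ d := fun h => hc (h ▸ hd)
    exact hA.eigenvectorBasis.orthonormal.2 hne
  | zero => simp
  | add y z _ _ hy hz => simp [hy, hz]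
  | smul a y _ hy => simp [hy]

lemma finrank_span_basis_image {A : Matrix n n ℝ} (hA : A.IsHermitian) (s : Finset n) :
    Module.finrank ℝ (Submodule.span ℝ (hA.eigenvectorBasis '' (s : Set n))) = s.card := by
  have hli : LinearIndependent ℝ
      (fun c : {c // c ∈ s} => (hA.eigenvectorBasis c : EuclideanSpace ℝ n)) :=
    (hA.eigenvectorBasis.orthonormal.linearIndependent).comp _ Subtype.val_injective
  have hrange : Set.range
      (fun c : {c // c ∈ s} => (hA.eigenvectorBasis c : EuclideanSpace ℝ n))
      = hA.eigenvectorBasis '' (s : Set n) := by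
    ext y; simp [Set.mem_image]
  rw [← hrange, finrank_span_eq_card hli, Fintype.card_coe]

lemma dot_self_pos (x : EuclideanSpace ℝ n) (hx : x ≠ 0) : 0 < x ⬝ᵥ x := by
  have h0 : x ⬝ᵥ x ≠ 0 := fun h => hx (WithLp.ofLp_injective 2 (dotProduct_self_eq_zero.mp h))
  have h1 : 0 ≤ x ⬝ᵥ x := Finset.sum_nonneg fun i _ => mul_self_nonneg _
  exact lt_of_le_of_ne h1 (Ne.symm h0)

lemma cf_le {A : Matrix n n ℝ} (hA : A.IsHermitian)
    {μ : Fin (Fintype.card n) → ℝ} (hμmono : Monotone μ) (e : n ≃ Fin (Fintype.card n))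
    (hμ : ∀ c, hA.eigenvalues c = μ (e c)) (i : Fin (Fintype.card n)) (t : ℝ)
    (W : Submodule ℝ (EuclideanSpace ℝ n)) (hdim : (i : ℕ) + 1 ≤ Module.finrank ℝ W)
    (hW : ∀ x ∈ W, x ⬝ᵥ (A *ᵥ x) ≤ t * (x ⬝ᵥ x)) : μ i ≤ t := by
  classical
  set s : Finset n := Finset.univ.filter (fun d => i ≤ e d) with hs
  set Z := Submodule.span ℝ (hA.eigenvectorBasis '' (s : Set n)) with hZ
  have hcards : s.card = Fintype.card n - i := by
    have h1 : s.card = (Finset.Ici i).card := by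
      apply Finset.card_bij' (fun d _ => e d) (fun j _ => e.symm j)
      · intro d hd; simp only [hs, Finset.mem_filter] at hd
        exact Finset.mem_Ici.mpr hd.2
      · intro j hj; simp only [hs, Finset.mem_filter]
        exact ⟨Finset.mem_univ _, by simpa using Finset.mem_Ici.mp hj⟩
      · intro d _; simp
      · intro j _; simp
    rw [h1, Fin.card_Ici]
  have hZdim : Module.finrank ℝ Z = Fintype.card n - i := by
    rw [hZ, finrank_span_basis_image hA s, hcards]
  -- intersection is nontrivial
  have hpos : 0 < Module.finrank ℝ ↥(W ⊓ Z) := by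
    by_contra h
    push_neg at h
    interval_cases h' : Module.finrank ℝ ↥(W ⊓ Z)
    have hsum := Submodule.finrank_sup_add_finrank_inf_eq W Z
    rw [h'] at hsum
    have hle : Module.finrank ℝ ↥(W ⊔ Z) ≤ Fintype.card n := by
      calc Module.finrank ℝ ↥(W ⊔ Z) ≤ Module.finrank ℝ (EuclideanSpace ℝ n) :=
            Submodule.finrank_le _
        _ = Fintype.card n := finrank_euclideanSpace
    have hi : (i : ℕ) < Fintype.card n := i.2
    omega
  obtain ⟨⟨x, hxWZ⟩, hxne⟩ := Module.finrank_pos_iff_exists_ne_zero.mp hpos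
  have hxW : x ∈ W := hxWZ.1
  have hxZ : x ∈ Z := hxWZ.2
  have hx0 : x ≠ 0 := fun h => hxne (by simpa using h)
  have hlow : μ i * (x ⬝ᵥ x) ≤ x ⬝ᵥ (A *ᵥ x) := by
    rw [quad_expansion hA, dot_self_expansion hA, Finset.mul_sum]
    apply Finset.sum_le_sum
    intro c _
    by_cases hc : c ∈ s
    · have h1 : i ≤ e c := by simpa [hs] using (Finset.mem_filter.mp hc).2
      have h2 : μ i ≤ hA.eigenvalues c := by rw [hμ c]; exact hμmono h1
      exact mul_le_mul_of_nonneg_right h2 (sq_nonneg _)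
    · have := repr_zero_of_mem_span hA s x hxZ c hc
      simp [this]
  have hup := hW x hxW
  have hxx := dot_self_pos x hx0
  have := hlow.trans hup
  exact le_of_mul_le_mul_right (by linarith) hxx

lemma cf_ge {A : Matrix n n ℝ} (hA : A.IsHermitian)
    {μ : Fin (Fintype.card n) → ℝ} (hμmono : Monotone μ) (e : n ≃ Fin (Fintype.card n))
    (hμ : ∀ c, hA.eigenvalues c = μ (e c)) (i : Fin (Fintype.card n)) (t : ℝ)
    (W : Submodule ℝ (EuclideanSpace ℝ n)) (hdim : Fintype.card n - (i : ℕ) ≤ Module.finrank ℝ W)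
    (hW : ∀ x ∈ W, t * (x ⬝ᵥ x) ≤ x ⬝ᵥ (A *ᵥ x)) : t ≤ μ i := by
  classical
  set s : Finset n := Finset.univ.filter (fun d => e d ≤ i) with hs
  set Z := Submodule.span ℝ (hA.eigenvectorBasis '' (s : Set n)) with hZ
  have hcards : s.card = (i : ℕ) + 1 := by
    have h1 : s.card = (Finset.Iic i).card := by
      apply Finset.card_bij' (fun d _ => e d) (fun j _ => e.symm j)
      · intro d hd; simp only [hs, Finset.mem_filter] at hd
        exact Finset.mem_Iic.mpr hd.2
      · intro j hj; simp only [hs, Finset.mem_filter]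
        exact ⟨Finset.mem_univ _, by simpa using Finset.mem_Iic.mp hj⟩
      · intro d _; simp
      · intro j _; simp
    rw [h1, Fin.card_Iic]
  have hZdim : Module.finrank ℝ Z = (i : ℕ) + 1 := by
    rw [hZ, finrank_span_basis_image hA s, hcards]
  have hpos : 0 < Module.finrank ℝ ↥(W ⊓ Z) := by
    by_contra h
    push_neg at h
    interval_cases h' : Module.finrank ℝ ↥(W ⊓ Z)
    have hsum := Submodule.finrank_sup_add_finrank_inf_eq W Z
    rw [h'] at hsum
    have hle : Module.finrank ℝ ↥(W ⊔ Z) ≤ Fintype.card n := by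
      calc Module.finrank ℝ ↥(W ⊔ Z) ≤ Module.finrank ℝ (EuclideanSpace ℝ n) :=
            Submodule.finrank_le _
        _ = Fintype.card n := finrank_euclideanSpace
    have hi : (i : ℕ) < Fintype.card n := i.2
    omega
  obtain ⟨⟨x, hxWZ⟩, hxne⟩ := Module.finrank_pos_iff_exists_ne_zero.mp hpos
  have hxW : x ∈ W := hxWZ.1
  have hxZ : x ∈ Z := hxWZ.2
  have hx0 : x ≠ 0 := fun h => hxne (by simpa using h)
  have hhigh : x ⬝ᵥ (A *ᵥ x) ≤ μ i * (x ⬝ᵥ x) := by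
    rw [quad_expansion hA, dot_self_expansion hA, Finset.mul_sum]
    apply Finset.sum_le_sum
    intro c _
    by_cases hc : c ∈ s
    · have h1 : e c ≤ i := by simpa [hs] using (Finset.mem_filter.mp hc).2
      have h2 : hA.eigenvalues c ≤ μ i := by rw [hμ c]; exact hμmono h1
      exact mul_le_mul_of_nonneg_right h2 (sq_nonneg _)
    · have := repr_zero_of_mem_span hA s x hxZ c hc
      simp [this]
  have hup := hW x hxW
  have hxx := dot_self_pos x hx0
  have := hup.trans hhigh
  exact le_of_mul_le_mul_right (by linarith) hxx


lemma dot_mulVec_expand {m : Type*} [Fintype m] (x : m → ℝ) (M : Matrix m m ℝ) :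
    x ⬝ᵥ (M *ᵥ x) = ∑ c, ∑ d, x c * M c d * x d := by
  simp [dotProduct, Matrix.mulVec, dotProduct, Finset.mul_sum, mul_assoc]

lemma card_filter_le (e : n ≃ Fin (Fintype.card n)) (b : Fin (Fintype.card n)) :
    (Finset.univ.filter (fun d => e d ≤ b)).card = (b : ℕ) + 1 := by
  have h1 : (Finset.univ.filter (fun d => e d ≤ b)).card = (Finset.Iic b).card := by
    apply Finset.card_bij' (fun d _ => e d) (fun j _ => e.symm j)
    · intro d hd; simp only [Finset.mem_filter] at hd
      exact Finset.mem_Iic.mpr hd.2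
    · intro j hj; simp only [Finset.mem_filter]
      exact ⟨Finset.mem_univ _, by simpa using Finset.mem_Iic.mp hj⟩
    · intro d _; simp
    · intro j _; simp
  rw [h1, Fin.card_Iic]

lemma card_filter_ge (e : n ≃ Fin (Fintype.card n)) (a : Fin (Fintype.card n)) :
    (Finset.univ.filter (fun d => a ≤ e d)).card = Fintype.card n - (a : ℕ) := by
  have h1 : (Finset.univ.filter (fun d => a ≤ e d)).card = (Finset.Ici a).card := by
    apply Finset.card_bij' (fun d _ => e d) (fun j _ => e.symm j)
    · intro d hd; simp only [Finset.mem_filter] at hd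
      exact Finset.mem_Ici.mpr hd.2
    · intro j hj; simp only [Finset.mem_filter]
      exact ⟨Finset.mem_univ _, by simpa using Finset.mem_Ici.mp hj⟩
    · intro d _; simp
    · intro j _; simp
  rw [h1, Fin.card_Ici]

end CFGen

open CFGen

section Aux

variable (K N : ℕ) (G : Fin K → ℕ) (g : Fin N → ∀ k : Fin K, Fin (G k))
  (T0 : ℝ) (Tv : Fin K → ℝ) (τ : ℝ)

lemma U_some_some (s t : Lvl K G) : U K N G g (some s) (some t) = Ur K N G g s t := by
  simp [U, Ur, mul_apply, V, Vr]

lemma U_none_none : U K N G g none none = (N : ℝ) := by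
  simp [U, mul_apply, V]

lemma Ur_diag_eq (s : Lvl K G) :
    Ur K N G g s s = ∑ i, if g i s.1 = s.2 then (1:ℝ) else 0 := by
  simp only [Ur, mul_apply, Vr, transpose_apply]
  refine Finset.sum_congr rfl fun i _ => ?_
  by_cases h : g i s.1 = s.2 <;> simp [h]

lemma Ur_diag_ge_one (hobs : ∀ (k : Fin K) (a : Fin (G k)), ∃ i, g i k = a) (s : Lvl K G) :
    1 ≤ Ur K N G g s s := by
  obtain ⟨i0, hi0⟩ := hobs s.1 s.2
  rw [Ur_diag_eq]
  have : (if g i0 s.1 = s.2 then (1:ℝ) else 0) = 1 := by simp [hi0]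
  calc (1:ℝ) = if g i0 s.1 = s.2 then (1:ℝ) else 0 := this.symm
    _ ≤ ∑ i, if g i s.1 = s.2 then (1:ℝ) else 0 :=
      Finset.single_le_sum (f := fun i => if g i s.1 = s.2 then (1:ℝ) else 0)
        (fun i _ => by positivity) (Finset.mem_univ i0)

lemma Q_apply (c d : Idx K G) :
    Q K N G g T0 Tv τ c d
      = (if c = d then c.elim T0 (fun s => Tv s.1) else 0) + τ * U K N G g c d := by
  simp [Q, Matrix.diagonal_apply, Matrix.add_apply, Matrix.smul_apply, smul_eq_mul]

lemma Q_diag_pos (hT0 : 0 ≤ T0) (hTv : ∀ k, 0 ≤ Tv k) (hτ : 0 < τ) (hN : 1 ≤ N)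
    (hobs : ∀ (k : Fin K) (a : Fin (G k)), ∃ i, g i k = a) (c : Idx K G) :
    0 < Q K N G g T0 Tv τ c c := by
  rw [Q_apply]
  cases c with
  | none =>
    rw [U_none_none]
    have : (1:ℝ) ≤ (N:ℝ) := by exact_mod_cast hN
    simp only [if_pos rfl, Option.elim, if_true]
    nlinarith
  | some s =>
    have h1 := Ur_diag_ge_one K N G g hobs s
    rw [U_some_some]
    simp only [if_pos rfl, Option.elim, if_true]
    nlinarith [hTv s.1]

lemma Qbar_apply (c d : Idx K G) :
    Qbar K N G g T0 Tv τ c d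
      = (Real.sqrt (Q K N G g T0 Tv τ c c))⁻¹ * Q K N G g T0 Tv τ c d *
        (Real.sqrt (Q K N G g T0 Tv τ d d))⁻¹ := by
  simp [Qbar, Matrix.mul_diagonal, Matrix.diagonal_mul, mul_comm, mul_assoc]

lemma Abar_apply (s t : Lvl K G) :
    Abar K N G g s t
      = (Real.sqrt (((K : ℝ) - 1) * Ur K N G g s s))⁻¹ * Ar K N G g s t *
        (Real.sqrt (((K : ℝ) - 1) * Ur K N G g t t))⁻¹ := by
  simp [Abar, Matrix.mul_diagonal, Matrix.diagonal_mul, mul_comm, mul_assoc]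

lemma Ar_apply (s t : Lvl K G) :
    Ar K N G g s t = if s = t then 0 else Ur K N G g s t := by
  by_cases h : s = t
  · subst h; simp [Ar]
  · simp [Ar, Matrix.diagonal_apply, h]

noncomputable def dd (s : Lvl K G) : ℝ := Real.sqrt (((K : ℝ) - 1) * Ur K N G g s s)

noncomputable def qq (c : Idx K G) : ℝ := Real.sqrt (Q K N G g T0 Tv τ c c)

noncomputable def ww (s : Lvl K G) : ℝ :=
  qq K N G g T0 Tv τ (some s) / Real.sqrt (τ * (((K : ℝ) - 1) * Ur K N G g s s))

/-- The embedding `u ↦ (0, (w_s u_s)_s)` of the restricted space into the full space. -/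
noncomputable def phi : (EuclideanSpace ℝ (Lvl K G)) →ₗ[ℝ] EuclideanSpace ℝ (Idx K G) where
  toFun u := WithLp.toLp 2 (fun c => Option.elim c 0 (fun s => ww K N G g T0 Tv τ s * u s))
  map_add' u v := by
    apply WithLp.ofLp_injective 2
    funext c
    cases c with
    | none => simp
    | some s =>
      show ww K N G g T0 Tv τ s * (u s + v s)
        = ww K N G g T0 Tv τ s * u s + ww K N G g T0 Tv τ s * v s
      ring
  map_smul' a u := by
    apply WithLp.ofLp_injective 2
    funext c
    cases c with
    | none => simp
    | some s =>
      show ww K N G g T0 Tv τ s * (a * u s) = a * (ww K N G g T0 Tv τ s * u s)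
      ring

lemma phi_none (u : EuclideanSpace ℝ (Lvl K G)) : phi K N G g T0 Tv τ u none = 0 := rfl

lemma phi_some (u : EuclideanSpace ℝ (Lvl K G)) (s : Lvl K G) :
    phi K N G g T0 Tv τ u (some s) = ww K N G g T0 Tv τ s * u s := rfl

end Aux

section Aux2

variable (K N : ℕ) (G : Fin K → ℕ) (g : Fin N → ∀ k : Fin K, Fin (G k))
  (T0 : ℝ) (Tv : Fin K → ℝ) (τ : ℝ)
  (hK : 2 ≤ K) (hN : 1 ≤ N)
  (hobs : ∀ (k : Fin K) (a : Fin (G k)), ∃ i, g i k = a)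
  (hT0 : 0 ≤ T0) (hTv : ∀ k, 0 ≤ Tv k) (hτ : 0 < τ)

include hK hN hobs hT0 hTv hτ

lemma Kpos : (0:ℝ) < (K : ℝ) - 1 := by
  have : (2:ℝ) ≤ (K:ℝ) := by exact_mod_cast hK
  linarith

lemma Ur_pos (s : Lvl K G) : 0 < Ur K N G g s s :=
  lt_of_lt_of_le one_pos (Ur_diag_ge_one K N G g hobs s)

lemma dd_pos (s : Lvl K G) : 0 < dd K N G g s :=
  Real.sqrt_pos.mpr (mul_pos (Kpos K N G g T0 Tv τ hK hN hobs hT0 hTv hτ)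
    (Ur_pos K N G g T0 Tv τ hK hN hobs hT0 hTv hτ s))

lemma qq_pos (c : Idx K G) : 0 < qq K N G g T0 Tv τ c :=
  Real.sqrt_pos.mpr (Q_diag_pos K N G g T0 Tv τ hT0 hTv hτ hN hobs c)

lemma ww_pos (s : Lvl K G) : 0 < ww K N G g T0 Tv τ s := by
  apply div_pos (qq_pos K N G g T0 Tv τ hK hN hobs hT0 hTv hτ (some s))
  exact Real.sqrt_pos.mpr (mul_pos hτ (mul_pos (Kpos K N G g T0 Tv τ hK hN hobs hT0 hTv hτ)
    (Ur_pos K N G g T0 Tv τ hK hN hobs hT0 hTv hτ s)))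

lemma qq_sq (c : Idx K G) :
    qq K N G g T0 Tv τ c * qq K N G g T0 Tv τ c = Q K N G g T0 Tv τ c c :=
  Real.mul_self_sqrt (Q_diag_pos K N G g T0 Tv τ hT0 hTv hτ hN hobs c).le

lemma dd_sq (s : Lvl K G) :
    dd K N G g s * dd K N G g s = ((K : ℝ) - 1) * Ur K N G g s s :=
  Real.mul_self_sqrt (mul_pos (Kpos K N G g T0 Tv τ hK hN hobs hT0 hTv hτ)
    (Ur_pos K N G g T0 Tv τ hK hN hobs hT0 hTv hτ s)).le

lemma sqrt_split (s : Lvl K G) :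
    Real.sqrt (τ * (((K : ℝ) - 1) * Ur K N G g s s)) = Real.sqrt τ * dd K N G g s := by
  rw [dd, Real.sqrt_mul hτ.le]

/-- The key entrywise identity. -/
lemma pair_identity (u : EuclideanSpace ℝ (Lvl K G)) (s t : Lvl K G) :
    phi K N G g T0 Tv τ u (some s) * Qbar K N G g T0 Tv τ (some s) (some t) *
        phi K N G g T0 Tv τ u (some t)
      = (if s = t then (phi K N G g T0 Tv τ u (some s))^2 else 0)
        + u s * Abar K N G g s t * u t := by
  have hqs := qq_pos K N G g T0 Tv τ hK hN hobs hT0 hTv hτ (some s)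
  have hqt := qq_pos K N G g T0 Tv τ hK hN hobs hT0 hTv hτ (some t)
  have hds := dd_pos K N G g T0 Tv τ hK hN hobs hT0 hTv hτ s
  have hdt := dd_pos K N G g T0 Tv τ hK hN hobs hT0 hTv hτ t
  have hst : (0:ℝ) < Real.sqrt τ := Real.sqrt_pos.mpr hτ
  have hsq : Real.sqrt τ * Real.sqrt τ = τ := Real.mul_self_sqrt hτ.le
  by_cases h : s = t
  · subst h
    rw [phi_some, Qbar_apply, Abar_apply, Ar_apply]
    simp only [if_pos rfl]
    have hq : (Real.sqrt (Q K N G g T0 Tv τ (some s) (some s)))⁻¹ *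
        Q K N G g T0 Tv τ (some s) (some s) *
        (Real.sqrt (Q K N G g T0 Tv τ (some s) (some s)))⁻¹ = 1 := by
      show (qq K N G g T0 Tv τ (some s))⁻¹ * Q K N G g T0 Tv τ (some s) (some s) *
        (qq K N G g T0 Tv τ (some s))⁻¹ = 1
      rw [← qq_sq K N G g T0 Tv τ hK hN hobs hT0 hTv hτ (some s)]
      field_simp
    rw [hq]
    ring_nf
    simp
  · rw [phi_some, phi_some, Qbar_apply, Abar_apply, Ar_apply, if_neg h, if_neg h]
    have hQst : Q K N G g T0 Tv τ (some s) (some t) = τ * Ur K N G g s t := by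
      rw [Q_apply, U_some_some]
      have : (some s : Idx K G) ≠ some t := by simpa using h
      rw [if_neg this, zero_add]
    rw [hQst, ww, ww, sqrt_split K N G g T0 Tv τ hK hN hobs hT0 hTv hτ,
      sqrt_split K N G g T0 Tv τ hK hN hobs hT0 hTv hτ]
    show qq K N G g T0 Tv τ (some s) / (Real.sqrt τ * dd K N G g s) * u s *
        ((qq K N G g T0 Tv τ (some s))⁻¹ * (τ * Ur K N G g s t) *
          (qq K N G g T0 Tv τ (some t))⁻¹) *
        (qq K N G g T0 Tv τ (some t) / (Real.sqrt τ * dd K N G g t) * u t)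
      = 0 + u s * ((dd K N G g s)⁻¹ * Ur K N G g s t * (dd K N G g t)⁻¹) * u t
    rw [zero_add, show τ * Ur K N G g s t = Real.sqrt τ * Real.sqrt τ * Ur K N G g s t by
      rw [hsq]]
    field_simp

lemma quad_split (u : EuclideanSpace ℝ (Lvl K G)) :
    phi K N G g T0 Tv τ u ⬝ᵥ (Qbar K N G g T0 Tv τ *ᵥ phi K N G g T0 Tv τ u)
      = phi K N G g T0 Tv τ u ⬝ᵥ phi K N G g T0 Tv τ u + u ⬝ᵥ (Abar K N G g *ᵥ u) := by
  have key := pair_identity K N G g T0 Tv τ hK hN hobs hT0 hTv hτ u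
  have hx0 : phi K N G g T0 Tv τ u none = 0 := rfl
  calc phi K N G g T0 Tv τ u ⬝ᵥ (Qbar K N G g T0 Tv τ *ᵥ phi K N G g T0 Tv τ u)
      = ∑ c, ∑ d, phi K N G g T0 Tv τ u c * Qbar K N G g T0 Tv τ c d *
          phi K N G g T0 Tv τ u d := dot_mulVec_expand _ _
    _ = ∑ s : Lvl K G, ∑ t : Lvl K G, phi K N G g T0 Tv τ u (some s) *
          Qbar K N G g T0 Tv τ (some s) (some t) * phi K N G g T0 Tv τ u (some t) := by
        rw [Fintype.sum_option]
        simp only [hx0, zero_mul, mul_zero, Finset.sum_const_zero, zero_add]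
        refine Finset.sum_congr rfl fun s _ => ?_
        rw [Fintype.sum_option]
        simp only [hx0, zero_mul, mul_zero, zero_add]
    _ = ∑ s : Lvl K G, ∑ t : Lvl K G,
          ((if s = t then (phi K N G g T0 Tv τ u (some s))^2 else 0)
            + u s * Abar K N G g s t * u t) :=
        Finset.sum_congr rfl fun s _ => Finset.sum_congr rfl fun t _ => key s t
    _ = (∑ s : Lvl K G, (phi K N G g T0 Tv τ u (some s))^2)
          + ∑ s : Lvl K G, ∑ t : Lvl K G, u s * Abar K N G g s t * u t := by
        rw [← Finset.sum_add_distrib]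
        refine Finset.sum_congr rfl fun s _ => ?_
        rw [Finset.sum_add_distrib]
        congr 1
        simp
    _ = phi K N G g T0 Tv τ u ⬝ᵥ phi K N G g T0 Tv τ u + u ⬝ᵥ (Abar K N G g *ᵥ u) := by
        rw [dot_mulVec_expand (u : Lvl K G → ℝ) (Abar K N G g)]
        congr 1
        rw [show phi K N G g T0 Tv τ u ⬝ᵥ phi K N G g T0 Tv τ u
          = ∑ c, phi K N G g T0 Tv τ u c * phi K N G g T0 Tv τ u c from rfl,
          Fintype.sum_option]
        simp only [hx0, zero_mul, zero_add, sq]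

lemma ww_sq_lb (s : Lvl K G) : 1 ≤ ((K : ℝ) - 1) * ww K N G g T0 Tv τ s ^ 2 := by
  have hKp := Kpos K N G g T0 Tv τ hK hN hobs hT0 hTv hτ
  have hUp := Ur_pos K N G g T0 Tv τ hK hN hobs hT0 hTv hτ s
  have hQp := Q_diag_pos K N G g T0 Tv τ hT0 hTv hτ hN hobs (some s)
  have h1 : ww K N G g T0 Tv τ s ^ 2
      = Q K N G g T0 Tv τ (some s) (some s) / (τ * (((K : ℝ) - 1) * Ur K N G g s s)) := by
    rw [ww, div_pow, sq, sq, qq_sq K N G g T0 Tv τ hK hN hobs hT0 hTv hτ (some s),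
      Real.mul_self_sqrt (by positivity)]
  have h2 : τ * Ur K N G g s s ≤ Q K N G g T0 Tv τ (some s) (some s) := by
    rw [Q_apply, U_some_some]
    have := hTv s.1
    simp only [if_pos rfl, Option.elim, if_true]
    linarith
  rw [h1]
  rw [mul_div_assoc']
  rw [le_div_iff₀ (by positivity)]
  calc 1 * (τ * (((K:ℝ) - 1) * Ur K N G g s s)) = ((K:ℝ)-1) * (τ * Ur K N G g s s) := by ring
    _ ≤ ((K:ℝ)-1) * Q K N G g T0 Tv τ (some s) (some s) := by
        exact mul_le_mul_of_nonneg_left h2 hKp.le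

lemma dot_le_phi (u : EuclideanSpace ℝ (Lvl K G)) :
    u ⬝ᵥ u ≤ ((K : ℝ) - 1) * (phi K N G g T0 Tv τ u ⬝ᵥ phi K N G g T0 Tv τ u) := by
  have hx0 : phi K N G g T0 Tv τ u none = 0 := rfl
  have h1 : phi K N G g T0 Tv τ u ⬝ᵥ phi K N G g T0 Tv τ u
      = ∑ s : Lvl K G, (ww K N G g T0 Tv τ s * u s)^2 := by
    rw [show phi K N G g T0 Tv τ u ⬝ᵥ phi K N G g T0 Tv τ u
      = ∑ c, phi K N G g T0 Tv τ u c * phi K N G g T0 Tv τ u c from rfl, Fintype.sum_option]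
    simp only [hx0, zero_mul, zero_add, sq]
    rfl
  have h2 : u ⬝ᵥ u = ∑ s : Lvl K G, (u s)^2 := by
    simp [dotProduct, sq]
  rw [h1, h2, Finset.mul_sum]
  refine Finset.sum_le_sum fun s _ => ?_
  have h3 := ww_sq_lb K N G g T0 Tv τ hK hN hobs hT0 hTv hτ s
  calc (u s)^2 = 1 * (u s)^2 := by ring
    _ ≤ (((K:ℝ)-1) * ww K N G g T0 Tv τ s ^2) * (u s)^2 :=
        mul_le_mul_of_nonneg_right h3 (sq_nonneg _)
    _ = ((K:ℝ)-1) * (ww K N G g T0 Tv τ s * u s)^2 := by ring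

lemma abar_quad_lb (u : EuclideanSpace ℝ (Lvl K G)) :
    -(((K : ℝ) - 1))⁻¹ * (u ⬝ᵥ u) ≤ u ⬝ᵥ (Abar K N G g *ᵥ u) := by
  have hKp := Kpos K N G g T0 Tv τ hK hN hobs hT0 hTv hτ
  set y : Lvl K G → ℝ := fun s => (dd K N G g s)⁻¹ * u s with hy
  have hpsd : 0 ≤ y ⬝ᵥ (Ur K N G g *ᵥ y) := by
    rw [show Ur K N G g = (Vr K N G g)ᵀ * Vr K N G g from rfl, ← mulVec_mulVec,
      dotProduct_mulVec, vecMul_transpose]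
    exact Finset.sum_nonneg fun i _ => mul_self_nonneg _
  have hident : y ⬝ᵥ (Ur K N G g *ᵥ y)
      = u ⬝ᵥ (Abar K N G g *ᵥ u) + (((K : ℝ) - 1))⁻¹ * (u ⬝ᵥ u) := by
    rw [dot_mulVec_expand, dot_mulVec_expand (u : Lvl K G → ℝ)]
    have h2 : u ⬝ᵥ u = ∑ s : Lvl K G, (u s)^2 := by simp [dotProduct, sq]
    rw [h2, Finset.mul_sum, ← Finset.sum_add_distrib]
    refine Finset.sum_congr rfl fun s _ => ?_
    have hrow : ∀ t : Lvl K G, y s * Ur K N G g s t * y t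
        = u s * Abar K N G g s t * u t
          + (if t = s then (((K : ℝ) - 1))⁻¹ * (u s)^2 else 0) := by
      intro t
      have hds := dd_pos K N G g T0 Tv τ hK hN hobs hT0 hTv hτ s
      have hdt := dd_pos K N G g T0 Tv τ hK hN hobs hT0 hTv hτ t
      rw [Abar_apply, Ar_apply]
      by_cases h : s = t
      · subst h
        simp only [if_pos rfl]
        have hdsq := dd_sq K N G g T0 Tv τ hK hN hobs hT0 hTv hτ s
        have hUp := Ur_pos K N G g T0 Tv τ hK hN hobs hT0 hTv hτ s
        show (dd K N G g s)⁻¹ * u s * Ur K N G g s s * ((dd K N G g s)⁻¹ * u s)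
          = u s * ((Real.sqrt (((K:ℝ)-1) * Ur K N G g s s))⁻¹ * 0 *
              (Real.sqrt (((K:ℝ)-1) * Ur K N G g s s))⁻¹) * u s
            + ((K:ℝ)-1)⁻¹ * (u s)^2
        field_simp
        rw [mul_zero, zero_add, sq (dd K N G g s), hdsq]; ring
      · have h' : ¬ (t = s) := fun ht => h ht.symm
        rw [if_neg h, if_neg h']
        show (dd K N G g s)⁻¹ * u s * Ur K N G g s t * ((dd K N G g t)⁻¹ * u t)
          = u s * ((dd K N G g s)⁻¹ * Ur K N G g s t * (dd K N G g t)⁻¹) * u t + 0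
        ring
    rw [Finset.sum_congr rfl fun t _ => hrow t, Finset.sum_add_distrib]
    congr 1
    simp
  linarith

lemma abar_eig_lb (hA : (Abar K N G g).IsHermitian) (c : Lvl K G) :
    -(((K : ℝ) - 1))⁻¹ ≤ hA.eigenvalues c := by
  set v : EuclideanSpace ℝ (Lvl K G) := hA.eigenvectorBasis c with hv
  have hv1 : ‖v‖ = 1 := hA.eigenvectorBasis.orthonormal.1 c
  have hvne : v ≠ 0 := by
    intro h
    rw [h, norm_zero] at hv1
    exact one_ne_zero hv1.symm
  have hmv : Abar K N G g *ᵥ (v : Lvl K G → ℝ) = hA.eigenvalues c • (v : Lvl K G → ℝ) :=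
    hA.mulVec_eigenvectorBasis c
  have hq : v ⬝ᵥ (Abar K N G g *ᵥ v) = hA.eigenvalues c * (v ⬝ᵥ v) := by
    rw [hmv]
    show ∑ d, v d * (hA.eigenvalues c * v d) = hA.eigenvalues c * ∑ d, v d * v d
    rw [Finset.mul_sum]
    exact Finset.sum_congr rfl fun d _ => by ring
  have hlow := abar_quad_lb K N G g T0 Tv τ hK hN hobs hT0 hTv hτ v
  have hvv := CFGen.dot_self_pos v hvne
  rw [hq] at hlow
  have := (mul_le_mul_iff_left₀ hvv).mp hlow
  linarith [this]

end Aux2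


/-- Lemma 1 of the paper: if `ν̄_K ≤ 0 ≤ ν̄_{p−2}` then
`μ̄_{p−2}·(1 + (K−1)ν̄_K) ≤ μ̄_{K+1}·(1 + (K−1)ν̄_{p−2})`, i.e. the effective condition
number satisfies `κ_{K+1,p−2}(Q̄) ≤ (1 + (K−1)ν̄_{p−2})/(1 + (K−1)ν̄_K)` whenever the
denominator is positive.  (Eigenvalue lists are sorted nondecreasingly; `μ̄_{p−2}` is
`μ` at 0-based index `p−3`, `μ̄_{K+1}` at index `K`, `ν̄_K` at index `K−1`, and
`ν̄_{p−2}` at 0-based index `(p−1)−2` of the `p−1` eigenvalues of `Ā^(r)`.) -/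
theorem effective_condition_number_bound (K N : ℕ) (G : Fin K → ℕ)
    (g : Fin N → ∀ k : Fin K, Fin (G k))
    (hK : 2 ≤ K) (hGk : ∀ k, 1 ≤ G k) (hN : 1 ≤ N)
    (hp : K + 1 ≤ ∑ k, G k)
    (hobs : ∀ (k : Fin K) (a : Fin (G k)), ∃ i, g i k = a)
    (T0 : ℝ) (Tv : Fin K → ℝ) (τ : ℝ)
    (hT0 : 0 ≤ T0) (hTv : ∀ k, 0 ≤ Tv k) (hτ : 0 < τ)
    (hQ : (Qbar K N G g T0 Tv τ).IsHermitian)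
    (μ : Fin (Fintype.card (Idx K G)) → ℝ) (hμmono : Monotone μ)
    (eQ : Idx K G ≃ Fin (Fintype.card (Idx K G)))
    (hμ : ∀ c, hQ.eigenvalues c = μ (eQ c))
    (hA : (Abar K N G g).IsHermitian)
    (ν : Fin (Fintype.card (Lvl K G)) → ℝ) (hνmono : Monotone ν)
    (eA : Lvl K G ≃ Fin (Fintype.card (Lvl K G)))
    (hν : ∀ c, hA.eigenvalues c = ν (eA c)) :
    ∀ (i j : Fin (Fintype.card (Idx K G))) (a b : Fin (Fintype.card (Lvl K G))),
      (i : ℕ) = Fintype.card (Idx K G) - 3 → (j : ℕ) = K →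
      (a : ℕ) = K - 1 → (b : ℕ) = Fintype.card (Lvl K G) - 2 →
      ν a ≤ 0 → 0 ≤ ν b →
      μ i * (1 + ((K : ℝ) - 1) * ν a) ≤ μ j * (1 + ((K : ℝ) - 1) * ν b) := by
  intro i j a b hi hj ha hb hνa hνb
  have hcard : Fintype.card (Idx K G) = Fintype.card (Lvl K G) + 1 := Fintype.card_option
  have hS : K + 1 ≤ Fintype.card (Lvl K G) := by
    have : Fintype.card (Lvl K G) = ∑ k, G k := by
      simp [Fintype.card_sigma]
    omega
  have hKp : (0:ℝ) < (K : ℝ) - 1 := Kpos K N G g T0 Tv τ hK hN hobs hT0 hTv hτ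
  have hinj : Function.Injective (phi K N G g T0 Tv τ) := by
    intro u1 u2 h
    apply WithLp.ofLp_injective 2
    funext s
    have h1 := congrFun (congrArg (fun (f : EuclideanSpace ℝ (Idx K G)) => f.ofLp)
      h) (some s)
    have hwpos := ww_pos K N G g T0 Tv τ hK hN hobs hT0 hTv hτ s
    exact mul_left_cancel₀ hwpos.ne' h1
  -- eigenvalue lower bound on Abar
  have hnu_a : -(((K : ℝ) - 1))⁻¹ ≤ ν a := by
    have h1 := abar_eig_lb K N G g T0 Tv τ hK hN hobs hT0 hTv hτ hA (eA.symm a)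
    rwa [hν (eA.symm a), Equiv.apply_symm_apply] at h1
  have h3 : 0 ≤ 1 + ((K : ℝ) - 1) * ν a := by
    have h2 := mul_le_mul_of_nonneg_left hnu_a hKp.le
    rw [mul_neg, mul_inv_cancel₀ hKp.ne'] at h2
    linarith
  have h4 : 0 ≤ 1 + ((K : ℝ) - 1) * ν b := by nlinarith
  -- Bound 1 : μ i ≤ 1 + (K-1) ν b
  have h1 : μ i ≤ 1 + ((K : ℝ) - 1) * ν b := by
    set sb : Finset (Lvl K G) := Finset.univ.filter (fun d => eA d ≤ b) with hsb
    set E := Submodule.span ℝ (hA.eigenvectorBasis '' (sb : Set (Lvl K G))) with hE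
    set W := Submodule.map (phi K N G g T0 Tv τ) E with hW
    have hWrank : Module.finrank ℝ W = (b : ℕ) + 1 := by
      rw [hW, ← (Submodule.equivMapOfInjective _ hinj E).finrank_eq, hE,
        CFGen.finrank_span_basis_image hA sb, hsb, CFGen.card_filter_le eA b]
    refine CFGen.cf_le hQ hμmono eQ hμ i _ W ?_ ?_
    · rw [hWrank]; omega
    · intro x hx
      obtain ⟨u, huE, rfl⟩ := Submodule.mem_map.mp hx
      rw [quad_split K N G g T0 Tv τ hK hN hobs hT0 hTv hτ u]
      have hub : u ⬝ᵥ (Abar K N G g *ᵥ u) ≤ ν b * (u ⬝ᵥ u) := by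
        rw [CFGen.quad_expansion hA u, CFGen.dot_self_expansion hA u, Finset.mul_sum]
        refine Finset.sum_le_sum fun d _ => ?_
        by_cases hd : d ∈ sb
        · have hdb : eA d ≤ b := by simpa [hsb] using (Finset.mem_filter.mp hd).2
          have : hA.eigenvalues d ≤ ν b := by rw [hν d]; exact hνmono hdb
          exact mul_le_mul_of_nonneg_right this (sq_nonneg _)
        · rw [CFGen.repr_zero_of_mem_span hA sb u huE d hd]
          simp
      have hphile := dot_le_phi K N G g T0 Tv τ hK hN hobs hT0 hTv hτ u
      have h5 := mul_le_mul_of_nonneg_left hphile hνb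
      nlinarith [hub, h5]
  -- Bound 2 : 1 + (K-1) ν a ≤ μ j
  have h2 : 1 + ((K : ℝ) - 1) * ν a ≤ μ j := by
    set sa : Finset (Lvl K G) := Finset.univ.filter (fun d => a ≤ eA d) with hsa
    set E := Submodule.span ℝ (hA.eigenvectorBasis '' (sa : Set (Lvl K G))) with hE
    set W := Submodule.map (phi K N G g T0 Tv τ) E with hW
    have hWrank : Module.finrank ℝ W = Fintype.card (Lvl K G) - (a : ℕ) := by
      rw [hW, ← (Submodule.equivMapOfInjective _ hinj E).finrank_eq, hE,
        CFGen.finrank_span_basis_image hA sa, hsa, CFGen.card_filter_ge eA a]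
    refine CFGen.cf_ge hQ hμmono eQ hμ j _ W ?_ ?_
    · rw [hWrank]; omega
    · intro x hx
      obtain ⟨u, huE, rfl⟩ := Submodule.mem_map.mp hx
      rw [quad_split K N G g T0 Tv τ hK hN hobs hT0 hTv hτ u]
      have hub : ν a * (u ⬝ᵥ u) ≤ u ⬝ᵥ (Abar K N G g *ᵥ u) := by
        rw [CFGen.quad_expansion hA u, CFGen.dot_self_expansion hA u, Finset.mul_sum]
        refine Finset.sum_le_sum fun d _ => ?_
        by_cases hd : d ∈ sa
        · have hda : a ≤ eA d := by simpa [hsa] using (Finset.mem_filter.mp hd).2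
          have : ν a ≤ hA.eigenvalues d := by rw [hν d]; exact hνmono hda
          exact mul_le_mul_of_nonneg_right this (sq_nonneg _)
        · rw [CFGen.repr_zero_of_mem_span hA sa u huE d hd]
          simp
      have hphile := dot_le_phi K N G g T0 Tv τ hK hN hobs hT0 hTv hτ u
      have h5 := mul_le_mul_of_nonpos_left hphile hνa
      nlinarith [hub, h5]
  calc μ i * (1 + ((K : ℝ) - 1) * ν a)
      ≤ (1 + ((K : ℝ) - 1) * ν b) * (1 + ((K : ℝ) - 1) * ν a) :=
        mul_le_mul_of_nonneg_right h1 h3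
    _ = (1 + ((K : ℝ) - 1) * ν a) * (1 + ((K : ℝ) - 1) * ν b) := by ring
    _ ≤ μ j * (1 + ((K : ℝ) - 1) * ν b) := mul_le_mul_of_nonneg_right h2 h4

end Crossed
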